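/- Let d ∈ (0,1), let w be a homeomorphism of [0,1] with w(d) ≤ d, and let b₁', b₂' be homeomorphisms that are the identity on [0,d], with u₂' = b₁'wb₂' and b₂'(w⁻¹(d)) = w⁻¹(d). If b_{σ₂} is any homeomorphism fixing [0,d] pointwise that agrees with b₂' on [0, w⁻¹(d)], then b_{σ₁} := u₂' b_{σ₂}⁻¹ w⁻¹ is also the identity on [0,d], and u₂' = b_{σ₁} w b_{σ₂}. -/

import Mathlib

theorem Equiv.Perm.apply_inv_self {α : Type*} (f : Equiv.Perm α) (x : α) : f (f⁻¹ x) = x :=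
  f.apply_symm_apply x

theorem Equiv.Perm.inv_apply_self {α : Type*} (f : Equiv.Perm α) (x : α) : f⁻¹ (f x) = x :=
  f.symm_apply_apply x

/-- An orientation-preserving homeomorphism of `[0,1]`, modeled as a permutation of `ℝ`
that is continuous, strictly increasing, and the identity outside `[0,1]`. -/
def IsHomeoI (f : Equiv.Perm ℝ) : Prop :=
  Continuous ⇑f ∧ StrictMono ⇑f ∧ ∀ t : ℝ, t ≤ 0 ∨ 1 ≤ t → f t = t

/-- Eve's recovered pair in the attack on the Ko–Lee variant protocol: if `bσ₂` fixes
`[0,d]` pointwise and agrees with `b₂'` on `[0, w⁻¹(d)]`, then `bσ₁ := u₂' bσ₂⁻¹ w⁻¹`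
is the identity on `[0,d]` and `u₂' = bσ₁ w bσ₂`. -/
theorem kolee_variant_recovered_pair (d : ℝ) (hd : d ∈ Set.Ioo (0:ℝ) 1)
    (w b₁' b₂' bσ₂ u₂' bσ₁ : Equiv.Perm ℝ)
    (hw : IsHomeoI w) (hwd : w d ≤ d)
    (hb₁' : IsHomeoI b₁') (hb₂' : IsHomeoI b₂') (hbσ₂ : IsHomeoI bσ₂)
    (hb₁'id : ∀ t ∈ Set.Icc (0:ℝ) d, b₁' t = t)
    (hb₂'id : ∀ t ∈ Set.Icc (0:ℝ) d, b₂' t = t)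
    (hu₂' : u₂' = b₁' * w * b₂')
    (hfix : b₂' (w⁻¹ d) = w⁻¹ d)
    (hbσ₂id : ∀ t ∈ Set.Icc (0:ℝ) d, bσ₂ t = t)
    (hagree : ∀ t ∈ Set.Icc (0:ℝ) (w⁻¹ d), bσ₂ t = b₂' t)
    (hbσ₁ : bσ₁ = u₂' * bσ₂⁻¹ * w⁻¹) :
    (∀ t ∈ Set.Icc (0:ℝ) d, bσ₁ t = t) ∧ u₂' = bσ₁ * w * bσ₂ := by
  obtain ⟨-, hwmono, hwout⟩ := hw
  obtain ⟨-, hbσmono, hbσout⟩ := hbσ₂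
  have hinv_le : ∀ {a b : ℝ}, a ≤ b → w⁻¹ a ≤ w⁻¹ b := by
    intro a b hab
    rw [← hwmono.le_iff_le]
    simpa [Equiv.Perm.apply_inv_self] using hab
  have hbinv_le : ∀ {a b : ℝ}, a ≤ b → bσ₂⁻¹ a ≤ bσ₂⁻¹ b := by
    intro a b hab
    rw [← hbσmono.le_iff_le]
    simpa [Equiv.Perm.apply_inv_self] using hab
  have hw0 : w (0:ℝ) = 0 := hwout 0 (Or.inl le_rfl)
  have hwinv0 : w⁻¹ (0:ℝ) = 0 := by
    rw [← hw0, Equiv.Perm.inv_apply_self, hw0]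
  have hbσ0 : bσ₂ (0:ℝ) = 0 := hbσout 0 (Or.inl le_rfl)
  have hbσinv0 : bσ₂⁻¹ (0:ℝ) = 0 := by
    rw [← hbσ0, Equiv.Perm.inv_apply_self, hbσ0]
  have hbσwd : bσ₂ (w⁻¹ d) = w⁻¹ d := by
    rw [hagree (w⁻¹ d) ⟨by simpa [hwinv0] using hinv_le hd.1.le, le_rfl⟩, hfix]
  have hbσinvwd : bσ₂⁻¹ (w⁻¹ d) = w⁻¹ d := by
    conv_lhs => rw [← hbσwd, Equiv.Perm.inv_apply_self]
  constructor
  · intro t ht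
    obtain ⟨ht0, htd⟩ := ht
    subst hbσ₁ hu₂'
    simp only [Equiv.Perm.mul_apply]
    set s := w⁻¹ t with hs
    have hs0 : 0 ≤ s := by have := hinv_le ht0; rwa [hwinv0] at this
    have hsd : s ≤ w⁻¹ d := hinv_le htd
    have hr0 : 0 ≤ bσ₂⁻¹ s := by simpa [hbσinv0] using hbinv_le hs0
    have hrd : bσ₂⁻¹ s ≤ w⁻¹ d := by have := hbinv_le hsd; rwa [hbσinvwd] at this
    have hb₂eq : b₂' (bσ₂⁻¹ s) = s := by
      rw [← hagree (bσ₂⁻¹ s) ⟨hr0, hrd⟩, Equiv.Perm.apply_inv_self]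
    rw [hb₂eq, hs, Equiv.Perm.apply_inv_self, hb₁'id t ⟨ht0, htd⟩]
  · rw [hbσ₁]; group
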